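/- For every finite simple graph G with vertex set V and all subsets X, Y, T ⊆ V, one has |Γ_T(X)| + |Γ_T(Y)| ≥ |Γ_T(X \ Y⁺)| + |Γ_T(Y \ X⁺)|. -/
import Mathlib


/-- `nbr G X` is Γ(X): the set of vertices outside `X` adjacent to a vertex of `X`. -/
def nbr {V : Type*} [Fintype V] [DecidableEq V] (G : SimpleGraph V) [DecidableRel G.Adj]
    (X : Finset V) : Finset V :=
  Finset.univ.filter (fun v => v ∉ X ∧ ∃ u ∈ X, G.Adj u v)

/-- `cl G X` is X⁺ = X ∪ nbr(X). -/
def cl {V : Type*} [Fintype V] [DecidableEq V] (G : SimpleGraph V) [DecidableRel G.Adj]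
    (X : Finset V) : Finset V :=
  X ∪ nbr G X

lemma mem_nbr {V : Type*} [Fintype V] [DecidableEq V] (G : SimpleGraph V) [DecidableRel G.Adj]
    (S : Finset V) (v : V) : v ∈ nbr G S ↔ v ∉ S ∧ ∃ u ∈ S, G.Adj u v := by
  simp [nbr]

lemma nbr_sdiff_subset {V : Type*} [Fintype V] [DecidableEq V] (G : SimpleGraph V)
    [DecidableRel G.Adj] (A B : Finset V) :
    nbr G (A \ cl G B) ⊆ nbr G A ∪ nbr G B := by
  intro v hv
  rw [mem_nbr] at hv
  obtain ⟨hvn, u, hu, hadj⟩ := hv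
  rw [Finset.mem_sdiff] at hu
  obtain ⟨huA, huB⟩ := hu
  rw [Finset.mem_union, mem_nbr, mem_nbr]
  by_cases hvA : v ∈ A
  · right
    have hvcl : v ∈ cl G B := by
      by_contra h
      exact hvn (Finset.mem_sdiff.mpr ⟨hvA, h⟩)
    rw [cl, Finset.mem_union, mem_nbr] at hvcl
    rcases hvcl with hvB | h
    · exfalso
      apply huB
      rw [cl, Finset.mem_union, mem_nbr]
      have huB' : u ∉ B := fun h => huB (by rw [cl, Finset.mem_union]; exact Or.inl h)
      exact Or.inr ⟨huB', v, hvB, hadj.symm⟩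
    · exact h
  · exact Or.inl ⟨hvA, u, huA, hadj⟩

lemma nbr_inter_subset {V : Type*} [Fintype V] [DecidableEq V] (G : SimpleGraph V)
    [DecidableRel G.Adj] (A B : Finset V) :
    nbr G (A \ cl G B) ∩ nbr G (B \ cl G A) ⊆ nbr G A ∩ nbr G B := by
  intro v hv
  rw [Finset.mem_inter, mem_nbr, mem_nbr] at hv
  obtain ⟨⟨_, u, hu, hadju⟩, ⟨_, w, hw, hadjw⟩⟩ := hv
  rw [Finset.mem_sdiff] at hu hw
  have hvA : v ∉ A := by
    intro hvA
    apply hw.2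
    rw [cl, Finset.mem_union, mem_nbr]
    have hwA : w ∉ A := fun h => hw.2 (by rw [cl, Finset.mem_union]; exact Or.inl h)
    exact Or.inr ⟨hwA, v, hvA, hadjw.symm⟩
  have hvB : v ∉ B := by
    intro hvB
    apply hu.2
    rw [cl, Finset.mem_union, mem_nbr]
    have huB : u ∉ B := fun h => hu.2 (by rw [cl, Finset.mem_union]; exact Or.inl h)
    exact Or.inr ⟨huB, v, hvB, hadju.symm⟩
  rw [Finset.mem_inter, mem_nbr, mem_nbr]
  exact ⟨⟨hvA, u, hu.1, hadju⟩, ⟨hvB, w, hw.1, hadjw⟩⟩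

theorem stmt_2 {V : Type*} [Fintype V] [DecidableEq V]
    (G : SimpleGraph V) [DecidableRel G.Adj] (X Y T : Finset V) :
    (nbr G (X \ cl G Y) ∩ T).card + (nbr G (Y \ cl G X) ∩ T).card ≤
      (nbr G X ∩ T).card + (nbr G Y ∩ T).card := by
  set A := nbr G (X \ cl G Y) ∩ T
  set B := nbr G (Y \ cl G X) ∩ T
  set C := nbr G X ∩ T
  set D := nbr G Y ∩ T
  have h1 : A ∪ B ⊆ C ∪ D := by
    intro v hv
    rw [Finset.mem_union] at hv
    have hvT : v ∈ T := by rcases hv with h | h <;> exact (Finset.mem_inter.mp h).2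
    have : v ∈ nbr G X ∪ nbr G Y := by
      rcases hv with h | h
      · exact nbr_sdiff_subset G X Y (Finset.mem_inter.mp h).1
      · rw [Finset.union_comm]
        exact nbr_sdiff_subset G Y X (Finset.mem_inter.mp h).1
    rw [Finset.mem_union] at this
    rw [Finset.mem_union]
    rcases this with h | h
    · exact Or.inl (Finset.mem_inter.mpr ⟨h, hvT⟩)
    · exact Or.inr (Finset.mem_inter.mpr ⟨h, hvT⟩)
  have h2 : A ∩ B ⊆ C ∩ D := by
    intro v hv
    rw [Finset.mem_inter, Finset.mem_inter, Finset.mem_inter] at hv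
    have := nbr_inter_subset G X Y (Finset.mem_inter.mpr ⟨hv.1.1, hv.2.1⟩)
    rw [Finset.mem_inter] at this
    rw [Finset.mem_inter, Finset.mem_inter, Finset.mem_inter]
    exact ⟨⟨this.1, hv.1.2⟩, ⟨this.2, hv.2.2⟩⟩
  calc A.card + B.card = (A ∪ B).card + (A ∩ B).card := (Finset.card_union_add_card_inter A B).symm
    _ ≤ (C ∪ D).card + (C ∩ D).card :=
        Nat.add_le_add (Finset.card_le_card h1) (Finset.card_le_card h2)
    _ = C.card + D.card := Finset.card_union_add_card_inter C D
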